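/- Let 𝒯 be a countable subgroup of (ℝ^d, +) and suppose the measurable set Ω ⊆ ℝ^d tiles ℝ^d by 𝒯. Let γ : ℝ^d → 𝒯 be a measurable map such that x − γ(x) ∈ Ω for almost every x ∈ ℝ^d (such a map exists and is a.e. uniquely determined by the tiling). For t ∈ ℝ^d define, for f ∈ L²(Ω) and x ∈ Ω, (U(t)f)(x) = f(x + t − γ(x + t)). Then: each U(t) is a unitary operator on L²(Ω); U(t₁)U(t₂) = U(t₁ + t₂) for all t₁, t₂ ∈ ℝ^d and U(0) = I; the map t ↦ U(t)f is continuous for every f ∈ L²(Ω); and (U(t))_{t∈ℝ^d} is a group of local translations on Ω. -/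

import Mathlib

open MeasureTheory Filter Topology
open scoped ENNReal

lemma tendsto_translate_Lp {d : ℕ} {E : Type*} [NormedAddCommGroup E] {p : ℝ≥0∞}
    [Fact (1 ≤ p)] (hp : p ≠ ∞) (X : Lp E p (volume : Measure (Fin d → ℝ))) :
    Tendsto (fun s : Fin d → ℝ =>
      Lp.compMeasurePreserving (E := E) (· + s) (measurePreserving_add_right volume s) X)
      (𝓝 0) (𝓝 X) := by
  have hcont : Continuous fun s : Fin d → ℝ =>
      (ContinuousMap.mk (fun x : Fin d → ℝ => x + s) (by continuity) : C(Fin d → ℝ, Fin d → ℝ)) := by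
    apply ContinuousMap.continuous_of_continuous_uncurry
    exact continuous_snd.add continuous_fst
  have key := Filter.Tendsto.compMeasurePreservingLp (μ := (volume : Measure (Fin d → ℝ)))
    (ν := (volume : Measure (Fin d → ℝ)))
    (l := (𝓝 (0 : Fin d → ℝ))) (f := fun _ => X) (f₀ := X)
    (g := fun s => (ContinuousMap.mk (fun x : Fin d → ℝ => x + s) (by continuity)))
    (g₀ := ContinuousMap.mk (fun x : Fin d → ℝ => x + 0) (by continuity))
    tendsto_const_nhds (hcont.tendsto 0)
    (fun s => measurePreserving_add_right volume s) (measurePreserving_add_right volume 0) hp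
  have heq : Lp.compMeasurePreserving (E := E) (fun x : Fin d → ℝ => x + 0)
      (measurePreserving_add_right volume 0) X = X := by
    apply Lp.ext
    filter_upwards [Lp.coeFn_compMeasurePreserving (μ := (volume : Measure (Fin d → ℝ))) X
      (measurePreserving_add_right volume 0)] with x hx
    simpa using hx
  simp only [ContinuousMap.coe_mk] at key
  rwa [heq] at key

/-- edist of a translate to the original tends to zero. -/
lemma tendsto_edist_translate {d : ℕ} {E : Type*} [NormedAddCommGroup E] {p : ℝ≥0∞}
    [Fact (1 ≤ p)] (hp : p ≠ ∞) (X : Lp E p (volume : Measure (Fin d → ℝ))) :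
    Tendsto (fun s : Fin d → ℝ =>
      eLpNorm (fun y => (X : (Fin d → ℝ) → E) (y + s) - (X : (Fin d → ℝ) → E) y) p volume)
      (𝓝 0) (𝓝 0) := by
  have h1 := tendsto_translate_Lp hp X
  have h2 : Tendsto (fun s : Fin d → ℝ =>
      edist (Lp.compMeasurePreserving (E := E) (· + s)
        (measurePreserving_add_right volume s) X) X) (𝓝 0) (𝓝 (edist X X)) :=
    h1.edist tendsto_const_nhds
  rw [edist_self] at h2
  refine h2.congr fun s => ?_
  rw [Lp.edist_def]
  apply eLpNorm_congr_ae
  filter_upwards [Lp.coeFn_compMeasurePreserving (μ := (volume : Measure (Fin d → ℝ))) X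
      (measurePreserving_add_right volume s), Lp.coeFn_sub
      (Lp.compMeasurePreserving (E := E) (· + s) (measurePreserving_add_right volume s) X) X]
    with y hy hy2
  simp only [hy2, Pi.sub_apply, hy, Function.comp_apply]


lemma aux_unique {d : ℕ} (T : AddSubgroup (Fin d → ℝ)) (Ω : Set (Fin d → ℝ))
    (htile : ∀ᵐ x ∂(volume : Measure (Fin d → ℝ)),
      ∑' τ : T, Set.indicator Ω (fun _ => (1 : ℝ)) (x - (τ : Fin d → ℝ)) = 1) :
    ∀ᵐ x ∂(volume : Measure (Fin d → ℝ)), ∃! τ : T, x - (τ : Fin d → ℝ) ∈ Ω := by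
  filter_upwards [htile] with x hx
  set f : T → ℝ := fun τ => Set.indicator Ω (fun _ => (1 : ℝ)) (x - (τ : Fin d → ℝ)) with hf
  have hf01 : ∀ τ, f τ = 0 ∨ f τ = 1 := by
    intro τ
    by_cases h : x - (τ : Fin d → ℝ) ∈ Ω
    · right; simp [hf, Set.indicator_of_mem h]
    · left; simp [hf, Set.indicator_of_notMem h]
  have hmem_iff : ∀ τ : T, x - (τ : Fin d → ℝ) ∈ Ω ↔ f τ = 1 := by
    intro τ
    constructor
    · intro h; simp [hf, Set.indicator_of_mem h]
    · intro h
      by_contra hc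
      simp [hf, Set.indicator_of_notMem hc] at h
  have hnonneg : ∀ τ, 0 ≤ f τ := fun τ => by
    rcases hf01 τ with h | h <;> simp [h]
  -- existence
  have hex : ∃ τ : T, x - (τ : Fin d → ℝ) ∈ Ω := by
    by_contra hc
    push_neg at hc
    have : ∀ τ : T, f τ = 0 := fun τ => by
      simp [hf, Set.indicator_of_notMem (hc τ)]
    rw [tsum_congr this] at hx
    simp at hx
  obtain ⟨τ₀, hτ₀⟩ := hex
  refine ⟨τ₀, hτ₀, ?_⟩
  intro τ₁ hτ₁
  by_contra hne
  -- two distinct tiles: sum ≥ 2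
  have hsum2 : ∑ τ ∈ ({τ₁, τ₀} : Finset T), f τ = 2 := by
    rw [Finset.sum_pair hne]
    rw [(hmem_iff τ₁).1 hτ₁, (hmem_iff τ₀).1 hτ₀]
    norm_num
  by_cases hsummable : Summable f
  · have := hsummable.sum_le_tsum ({τ₁, τ₀} : Finset T) (fun τ _ => hnonneg τ)
    rw [hsum2, hx] at this
    norm_num at this
  · rw [tsum_eq_zero_of_not_summable hsummable] at hx
    norm_num at hx

lemma aux_mem {d : ℕ} (T : AddSubgroup (Fin d → ℝ)) (hTc : (T : Set (Fin d → ℝ)).Countable)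
    (Ω : Set (Fin d → ℝ))
    (hone : ∀ᵐ x ∂(volume : Measure (Fin d → ℝ)), ∃! τ : T, x - (τ : Fin d → ℝ) ∈ Ω)
    (γ : (Fin d → ℝ) → (Fin d → ℝ)) (hγT : ∀ x, γ x ∈ T)
    (hγΩ : ∀ᵐ x ∂(volume : Measure (Fin d → ℝ)), x - γ x ∈ Ω) :
    ∀ᵐ x ∂(volume : Measure (Fin d → ℝ)), ∀ τ : T, (γ x = ↑τ ↔ x - ↑τ ∈ Ω) := by
  haveI : Countable T := hTc.to_subtype
  filter_upwards [hone, hγΩ] with x hx hxγ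
  intro τ
  constructor
  · intro h; rw [← h]; exact hxγ
  · intro hτ
    obtain ⟨σ, hσ, huniq⟩ := hx
    have h1 : (⟨γ x, hγT x⟩ : T) = σ := huniq _ hxγ
    have h2 : τ = σ := huniq _ hτ
    rw [h2]
    exact congrArg Subtype.val h1

lemma aux_MP {d : ℕ} (T : AddSubgroup (Fin d → ℝ)) (hTc : (T : Set (Fin d → ℝ)).Countable)
    (Ω : Set (Fin d → ℝ)) (hΩ : MeasurableSet Ω)
    (γ : (Fin d → ℝ) → (Fin d → ℝ)) (hγmeas : Measurable γ) (hγT : ∀ x, γ x ∈ T)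
    (hmem : ∀ᵐ x ∂(volume : Measure (Fin d → ℝ)), ∀ τ : T, (γ x = ↑τ ↔ x - ↑τ ∈ Ω))
    (hone : ∀ᵐ x ∂(volume : Measure (Fin d → ℝ)), ∃! τ : T, x - (τ : Fin d → ℝ) ∈ Ω)
    (t : Fin d → ℝ) :
    MeasurePreserving (fun x => x + t - γ (x + t)) (volume.restrict Ω) (volume.restrict Ω) := by
  haveI : Countable T := hTc.to_subtype
  have hSmeas : Measurable (fun x : Fin d → ℝ => x + t - γ (x + t)) :=
    (measurable_id.add_const t).sub (hγmeas.comp (measurable_id.add_const t))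
  refine ⟨hSmeas, ?_⟩
  ext A hA
  rw [Measure.map_apply hSmeas hA, Measure.restrict_apply (hSmeas hA),
    Measure.restrict_apply hA]
  -- decompose the preimage according to the value of γ (x + t)
  set E : T → Set (Fin d → ℝ) :=
    fun τ => ({x | γ (x + t) = ↑τ} ∩ {x | x + t - ↑τ ∈ A}) ∩ Ω with hE
  have hEmeas : ∀ τ : T, MeasurableSet (E τ) := by
    intro τ
    refine (MeasurableSet.inter ?_ ?_).inter hΩ
    · exact (hγmeas.comp (measurable_id.add_const t)) (measurableSet_singleton (↑τ : Fin d → ℝ))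
    · exact ((measurable_id.add_const t).sub_const (↑τ : Fin d → ℝ)) hA
  have hdecomp : (fun x => x + t - γ (x + t)) ⁻¹' A ∩ Ω = ⋃ τ : T, E τ := by
    ext x
    simp only [Set.mem_inter_iff, Set.mem_preimage, Set.mem_iUnion, hE, Set.mem_setOf_eq]
    constructor
    · rintro ⟨hxA, hxΩ⟩
      exact ⟨⟨γ (x + t), hγT (x + t)⟩, ⟨rfl, hxA⟩, hxΩ⟩
    · rintro ⟨τ, ⟨hγτ, hxA⟩, hxΩ⟩
      refine ⟨?_, hxΩ⟩
      rw [hγτ]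
      exact hxA
  have hdisj : Pairwise (Function.onFun Disjoint E) := by
    intro τ₁ τ₂ hne
    rw [Function.onFun, Set.disjoint_left]
    rintro x ⟨⟨h1, -⟩, -⟩ ⟨⟨h2, -⟩, -⟩
    exact hne (Subtype.ext (h1 ▸ h2 ▸ rfl))
  rw [hdecomp, measure_iUnion hdisj hEmeas]
  -- rewrite each piece using the characterization of γ
  have hterm : ∀ τ : T, volume (E τ)
      = volume ((Ω ∩ A) ∩ {y | y - (t - ↑τ) ∈ Ω}) := by
    intro τ
    have hmt : ∀ᵐ x ∂(volume : Measure (Fin d → ℝ)), ∀ τ' : T,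
        (γ (x + t) = ↑τ' ↔ x + t - ↑τ' ∈ Ω) :=
      (measurePreserving_add_right volume t).quasiMeasurePreserving.ae hmem
    have hae : E τ =ᵐ[volume]
        (({x | x + t - ↑τ ∈ Ω} ∩ {x | x + t - ↑τ ∈ A}) ∩ Ω : Set (Fin d → ℝ)) := by
      rw [Filter.eventuallyEq_set]
      filter_upwards [hmt] with x hx
      simp only [hE, Set.mem_inter_iff, Set.mem_setOf_eq]
      rw [hx τ]
    rw [measure_congr hae]
    have hpre : (({x | x + t - ↑τ ∈ Ω} ∩ {x | x + t - ↑τ ∈ A}) ∩ Ω : Set (Fin d → ℝ))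
        = (fun x => x + (t - ↑τ)) ⁻¹' ((Ω ∩ A) ∩ {y | y - (t - ↑τ) ∈ Ω}) := by
      ext x
      simp only [Set.mem_inter_iff, Set.mem_preimage, Set.mem_setOf_eq]
      constructor
      · rintro ⟨⟨h1, h2⟩, h3⟩
        refine ⟨⟨by rwa [← add_sub_assoc], by rwa [← add_sub_assoc]⟩, by simpa using h3⟩
      · rintro ⟨⟨h1, h2⟩, h3⟩
        exact ⟨⟨by rwa [add_sub_assoc], by rwa [add_sub_assoc]⟩, by simpa using h3⟩
    rw [hpre]
    exact (measurePreserving_add_right volume (t - ↑τ)).measure_preimage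
      (((hΩ.inter hA).inter ((measurable_id.sub_const _) hΩ)).nullMeasurableSet)
  rw [tsum_congr hterm]
  -- sum the translated indicators using the tiling property
  have hDmeas : ∀ τ : T, MeasurableSet {y : Fin d → ℝ | y - (t - ↑τ) ∈ Ω} :=
    fun τ => (measurable_id.sub_const _) hΩ
  have hCA : MeasurableSet (Ω ∩ A) := hΩ.inter hA
  have hterm2 : ∀ τ : T, volume ((Ω ∩ A) ∩ {y | y - (t - ↑τ) ∈ Ω})
      = ∫⁻ y, Set.indicator {y : Fin d → ℝ | y - (t - ↑τ) ∈ Ω} (1 : (Fin d → ℝ) → ℝ≥0∞) y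
          ∂(volume.restrict (Ω ∩ A)) := by
    intro τ
    rw [lintegral_indicator_one (hDmeas τ), Measure.restrict_apply (hDmeas τ), Set.inter_comm]
  rw [tsum_congr hterm2, ← lintegral_tsum (μ := volume.restrict (Ω ∩ A)) (fun τ => ((measurable_one.indicator (hDmeas τ)).aemeasurable))]
  have hae1 : ∀ᵐ y ∂(volume.restrict (Ω ∩ A)),
      ∑' τ : T, Set.indicator {y : Fin d → ℝ | y - (t - ↑τ) ∈ Ω} (1 : (Fin d → ℝ) → ℝ≥0∞) y = 1 := by
    apply ae_restrict_of_ae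
    have hone' : ∀ᵐ y ∂(volume : Measure (Fin d → ℝ)), ∃! τ : T, (y - t) - ↑τ ∈ Ω :=
      (measurePreserving_sub_right volume t).quasiMeasurePreserving.ae hone
    filter_upwards [hone'] with y hy
    obtain ⟨σ, hσ, huniq⟩ := hy
    have hmemiff : ∀ τ : T, (y - (t - (↑τ : Fin d → ℝ)) ∈ Ω) ↔ ((y - t) - (↑(-τ) : Fin d → ℝ) ∈ Ω) := by
      intro τ
      have h : y - (t - (↑τ : Fin d → ℝ)) = y - t - (↑(-τ) : Fin d → ℝ) := by
        push_cast
        ring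
      rw [h]
    rw [tsum_eq_single (-σ)]
    · have hy : y ∈ {y : Fin d → ℝ | y - (t - (↑(-σ) : Fin d → ℝ)) ∈ Ω} := by
        rw [Set.mem_setOf_eq, hmemiff (-σ)]
        simpa using hσ
      rw [Set.indicator_of_mem hy]
      rfl
    · intro τ hτ
      rw [Set.indicator_of_notMem]
      rw [Set.mem_setOf_eq, hmemiff τ]
      intro hc
      exact hτ (by rw [← huniq (-τ) hc]; simp)
  rw [lintegral_congr_ae hae1, lintegral_one, Measure.restrict_apply_univ, Set.inter_comm]
lemma aux_cont0 {d : ℕ} (Ω : Set (Fin d → ℝ)) (hΩ : MeasurableSet Ω)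
    (γ : (Fin d → ℝ) → (Fin d → ℝ)) (hγmeas : Measurable γ)
    (hγ0 : ∀ᵐ x ∂(volume : Measure (Fin d → ℝ)), x ∈ Ω → γ x = 0)
    (hSP : ∀ t : Fin d → ℝ, MeasurePreserving (fun x => x + t - γ (x + t))
      (volume.restrict Ω) (volume.restrict Ω))
    (g : Lp ℂ 2 (volume.restrict Ω))
    (Ug : (Fin d → ℝ) → Lp ℂ 2 (volume.restrict Ω))
    (hUg : ∀ r, (Ug r : (Fin d → ℝ) → ℂ) =ᵐ[volume.restrict Ω]
      fun x => (g : (Fin d → ℝ) → ℂ) (x + r - γ (x + r))) :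
    Tendsto Ug (𝓝 0) (𝓝 g) := by
  have htrans : ∀ (r : Fin d → ℝ) (p : (Fin d → ℝ) → Prop),
      (∀ᵐ x ∂(volume : Measure (Fin d → ℝ)), p x) →
      (∀ᵐ x ∂(volume : Measure (Fin d → ℝ)), p (x + r)) := fun r p hp =>
    (measurePreserving_add_right volume r).quasiMeasurePreserving.ae hp
  -- measurable representative of g
  obtain ⟨ψ, hψmeas, hψ⟩ : ∃ ψ, StronglyMeasurable ψ ∧
      (g : (Fin d → ℝ) → ℂ) =ᵐ[volume.restrict Ω] ψ :=
    ⟨(Lp.aestronglyMeasurable g).mk _, (Lp.aestronglyMeasurable g).stronglyMeasurable_mk,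
      (Lp.aestronglyMeasurable g).ae_eq_mk⟩
  have hmemψ : MemLp ψ 2 (volume.restrict Ω) := (Lp.memLp g).ae_eq hψ
  -- the squared-norm functions
  set φ : (Fin d → ℝ) → ℝ≥0∞ := fun x => (‖ψ x‖₊ : ℝ≥0∞) ^ (2:ℝ) with hφ
  have hφmeas : Measurable φ :=
    ENNReal.continuous_rpow_const.measurable.comp
      hψmeas.measurable.nnnorm.coe_nnreal_ennreal
  set Φt : (Fin d → ℝ) → ℝ≥0∞ := Ω.indicator φ with hΦt
  have hΦtmeas : Measurable Φt := hφmeas.indicator hΩ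
  set G : (Fin d → ℝ) → ℝ := Ω.indicator (fun x => ‖ψ x‖ ^ (2:ℝ)) with hG
  have hGmeas : StronglyMeasurable G :=
    (((Real.continuous_rpow_const (by norm_num)).measurable.comp hψmeas.norm.measurable).stronglyMeasurable).indicator hΩ
  have hGnonneg : ∀ y, 0 ≤ G y := by
    intro y
    apply Set.indicator_nonneg
    intro x _
    positivity
  have hΦtG : ∀ y, Φt y = ENNReal.ofReal (G y) := by
    intro y
    by_cases hy : y ∈ Ω
    · simp only [hΦt, hG, Set.indicator_of_mem hy, hφ]
      rw [← enorm_eq_nnnorm, ← ofReal_norm, ENNReal.ofReal_rpow_of_nonneg (norm_nonneg _) (by norm_num)]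
    · simp [hΦt, hG, Set.indicator_of_notMem hy]
  -- zero-extension of g as an element of L²(ℝ^d)
  have hmemH : MemLp (Ω.indicator ψ) 2 (volume : Measure (Fin d → ℝ)) :=
    (memLp_indicator_iff_restrict hΩ).2 hmemψ
  set H' : Lp ℂ 2 (volume : Measure (Fin d → ℝ)) := hmemH.toLp _ with hH'
  have hH : (H' : (Fin d → ℝ) → ℂ) =ᵐ[volume] Ω.indicator ψ := hmemH.coeFn_toLp
  -- |g|² extended by zero as an element of L¹(ℝ^d)
  have hmemG2 : MemLp (fun x => ‖ψ x‖ ^ (2:ℝ)) 1 (volume.restrict Ω) := by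
    have := hmemψ.norm_rpow (by norm_num) (by norm_num)
    simpa using this
  have hmemG : MemLp G 1 (volume : Measure (Fin d → ℝ)) :=
    (memLp_indicator_iff_restrict hΩ).2 hmemG2
  set Φ' : Lp ℝ 1 (volume : Measure (Fin d → ℝ)) := hmemG.toLp _ with hΦ'
  have hΦG : (Φ' : (Fin d → ℝ) → ℝ) =ᵐ[volume] G := hmemG.coeFn_toLp
  -- total mass
  set A : ℝ≥0∞ := ∫⁻ x, φ x ∂(volume.restrict Ω) with hA
  have hAtop : A ≠ ⊤ := by
    have h1 : eLpNorm ψ 2 (volume.restrict Ω) < ⊤ := hmemψ.2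
    rw [eLpNorm_eq_lintegral_rpow_enorm_toReal (by norm_num) (by norm_num)] at h1
    simp only [ENNReal.toReal_ofNat] at h1
    rw [ENNReal.rpow_lt_top_iff_of_pos (by norm_num)] at h1
    exact h1.ne
  
  -- the maps S r
  have hSmeas : ∀ r : Fin d → ℝ, Measurable (fun x : Fin d → ℝ => x + r - γ (x + r)) :=
    fun r => (measurable_id.add_const r).sub (hγmeas.comp (measurable_id.add_const r))
  have hgS : ∀ r, ((g : (Fin d → ℝ) → ℂ) ∘ (fun x => x + r - γ (x + r)))
      =ᵐ[volume.restrict Ω] (ψ ∘ (fun x => x + r - γ (x + r))) :=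
    fun r => (hSP r).quasiMeasurePreserving.ae_eq hψ
  -- the error functions
  set W : (Fin d → ℝ) → (Fin d → ℝ) → ℂ := fun r =>
    Set.indicator {x : Fin d → ℝ | x + r ∉ Ω} (fun x => ψ (x + r - γ (x + r))) with hW
  set D : (Fin d → ℝ) → ℝ≥0∞ := fun s =>
    eLpNorm (fun y => (Φ' : (Fin d → ℝ) → ℝ) (y + s) - (Φ' : (Fin d → ℝ) → ℝ) y) 1 volume with hD
  set N : (Fin d → ℝ) → ℝ≥0∞ := fun s =>
    eLpNorm (fun y => (H' : (Fin d → ℝ) → ℂ) (y + s) - (H' : (Fin d → ℝ) → ℂ) y) 2 volume with hN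
  have hneg : Tendsto (fun r : Fin d → ℝ => -r) (𝓝 0) (𝓝 0) := by
    simpa using (continuous_neg (G := Fin d → ℝ)).tendsto 0
  have hDtend : Tendsto (fun r : Fin d → ℝ => D (-r)) (𝓝 0) (𝓝 0) :=
    (tendsto_edist_translate (by norm_num) Φ').comp hneg
  have hNtend : Tendsto N (𝓝 0) (𝓝 0) := tendsto_edist_translate (by norm_num) H'
  -- the central inequality
  have hbound : ∀ r, edist (Ug r) g ≤ D (-r) ^ (1/2 : ℝ) + N r := by
    intro r
    rw [Lp.edist_def]
    have hasm1 : AEStronglyMeasurable (fun x => (H' : (Fin d → ℝ) → ℂ) (x + r))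
        (volume.restrict Ω) := by
      apply AEStronglyMeasurable.restrict (μ := (volume : Measure (Fin d → ℝ)))
      have h1 : (fun x => (H' : (Fin d → ℝ) → ℂ) (x + r)) =ᵐ[volume]
          (fun x => Ω.indicator ψ (x + r)) := htrans r _ hH
      exact (((hψmeas.indicator hΩ).comp_measurable
        (measurable_id.add_const r)).aestronglyMeasurable).congr h1.symm
    have htri : eLpNorm ((Ug r : (Fin d → ℝ) → ℂ) - (g : (Fin d → ℝ) → ℂ)) 2
          (volume.restrict Ω) ≤
        eLpNorm (fun x => (Ug r : (Fin d → ℝ) → ℂ) x - (H' : (Fin d → ℝ) → ℂ) (x + r)) 2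
          (volume.restrict Ω)
        + eLpNorm (fun x => (H' : (Fin d → ℝ) → ℂ) (x + r) - (g : (Fin d → ℝ) → ℂ) x) 2
          (volume.restrict Ω) := by
      have heqsum : ((Ug r : (Fin d → ℝ) → ℂ) - (g : (Fin d → ℝ) → ℂ)) =
          (fun x => (Ug r : (Fin d → ℝ) → ℂ) x - (H' : (Fin d → ℝ) → ℂ) (x + r))
          + (fun x => (H' : (Fin d → ℝ) → ℂ) (x + r) - (g : (Fin d → ℝ) → ℂ) x) := by
        funext x
        simp [sub_add_sub_cancel]
      rw [heqsum]
      exact eLpNorm_add_le ((Lp.aestronglyMeasurable (Ug r)).sub hasm1)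
        (hasm1.sub (Lp.aestronglyMeasurable g)) one_le_two
    refine htri.trans (add_le_add ?_ ?_)
    · -- main term
      have hmono : eLpNorm (fun x => (Ug r : (Fin d → ℝ) → ℂ) x
            - (H' : (Fin d → ℝ) → ℂ) (x + r)) 2 (volume.restrict Ω)
          ≤ eLpNorm (W r) 2 (volume.restrict Ω) := by
        apply eLpNorm_mono_ae
        filter_upwards [hUg r, hgS r, ae_restrict_of_ae (htrans r _ hγ0),
          ae_restrict_of_ae (htrans r _ hH)] with x h1 h2 h3 h4
        simp only [Function.comp_apply] at h2
        by_cases hxr : x + r ∈ Ω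
        · have hγz : γ (x + r) = 0 := h3 hxr
          rw [h1, h2, hγz, sub_zero, h4, Set.indicator_of_mem hxr]
          simp
        · have hWx : W r x = ψ (x + r - γ (x + r)) :=
            Set.indicator_of_mem (show x ∈ {x | x + r ∉ Ω} from hxr) _
          rw [h1, h2, h4, Set.indicator_of_notMem hxr, hWx, sub_zero]
      refine hmono.trans ?_
      rw [eLpNorm_eq_lintegral_rpow_enorm_toReal (by norm_num) (by norm_num)]
      simp only [ENNReal.toReal_ofNat]
      apply ENNReal.rpow_le_rpow _ (by norm_num)
      -- ∫⁻ ‖W r‖₊ ^ 2 ∂(restrict Ω) ≤ D (-r)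
      set I₁ : (Fin d → ℝ) → ℝ≥0∞ :=
        Set.indicator {x : Fin d → ℝ | x + r ∉ Ω} (fun x => φ (x + r - γ (x + r))) with hI₁
      set I₂ : (Fin d → ℝ) → ℝ≥0∞ :=
        Set.indicator {x : Fin d → ℝ | x + r ∈ Ω} (fun x => φ (x + r - γ (x + r))) with hI₂
      have hI₁meas : Measurable I₁ :=
        (hφmeas.comp (hSmeas r)).indicator ((measurable_id.add_const r) hΩ).compl
      have hWφ : ∀ x, ‖W r x‖ₑ ^ (2:ℝ) = I₁ x := by
        intro x
        by_cases hxr : x + r ∈ Ω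
        · have h0 : W r x = 0 := Set.indicator_of_notMem (by simpa using hxr) _
          have h0' : I₁ x = 0 := Set.indicator_of_notMem (by simpa using hxr) _
          rw [h0, h0']
          simp [ENNReal.zero_rpow_of_pos]
        · have h1 : W r x = ψ (x + r - γ (x + r)) :=
            Set.indicator_of_mem (show x ∈ {x | x + r ∉ Ω} from hxr) _
          have h2 : I₁ x = φ (x + r - γ (x + r)) :=
            Set.indicator_of_mem (show x ∈ {x | x + r ∉ Ω} from hxr) _
          rw [h1, h2]
          rfl
      rw [lintegral_congr hWφ]
      set LL : ℝ≥0∞ := ∫⁻ x, I₁ x ∂(volume.restrict Ω) with hLL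
      set K : (Fin d → ℝ) → ℝ≥0∞ := Set.indicator {y : Fin d → ℝ | y - r ∈ Ω} Φt with hK
      have hKmeas : Measurable K := hΦtmeas.indicator ((measurable_id.sub_const r) hΩ)
      set B : ℝ≥0∞ := ∫⁻ y, K y ∂volume with hB
      have hsplit : ∀ x, φ (x + r - γ (x + r)) = I₁ x + I₂ x := by
        intro x
        by_cases hxr : x + r ∈ Ω
        · have e1 : I₁ x = 0 := Set.indicator_of_notMem (by simpa using hxr) _
          have e2 : I₂ x = φ (x + r - γ (x + r)) :=
            Set.indicator_of_mem (show x ∈ {x | x + r ∈ Ω} from hxr) _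
          rw [e1, e2, zero_add]
        · have e1 : I₁ x = φ (x + r - γ (x + r)) :=
            Set.indicator_of_mem (show x ∈ {x | x + r ∉ Ω} from hxr) _
          have e2 : I₂ x = 0 := Set.indicator_of_notMem (by simpa using hxr) _
          rw [e1, e2, add_zero]
      have hAeq : A = ∫⁻ x, φ (x + r - γ (x + r)) ∂(volume.restrict Ω) :=
        ((hSP r).lintegral_comp hφmeas).symm
      have hI2B : ∫⁻ x, I₂ x ∂(volume.restrict Ω) = B := by
        have step1 : ∫⁻ x, I₂ x ∂(volume.restrict Ω)
            = ∫⁻ x, Set.indicator {x : Fin d → ℝ | x + r ∈ Ω}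
                (fun x => φ (x + r)) x ∂(volume.restrict Ω) := by
          apply lintegral_congr_ae
          filter_upwards [ae_restrict_of_ae (htrans r _ hγ0)] with x h3
          by_cases hxr : x + r ∈ Ω
          · have e1 : I₂ x = φ (x + r - γ (x + r)) :=
              Set.indicator_of_mem (show x ∈ {x | x + r ∈ Ω} from hxr) _
            have e2 : Set.indicator {x : Fin d → ℝ | x + r ∈ Ω}
                (fun x => φ (x + r)) x = φ (x + r) :=
              Set.indicator_of_mem (show x ∈ {x | x + r ∈ Ω} from hxr) _
            rw [e1, e2, h3 hxr, sub_zero]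
          · have e1 : I₂ x = 0 := Set.indicator_of_notMem (by simpa using hxr) _
            have e2 : Set.indicator {x : Fin d → ℝ | x + r ∈ Ω}
                (fun x => φ (x + r)) x = 0 :=
              Set.indicator_of_notMem (by simpa using hxr) _
            rw [e1, e2]
        have hJmeas : Measurable (Set.indicator {x : Fin d → ℝ | x + r ∈ Ω}
            (fun x => φ (x + r)) : (Fin d → ℝ) → ℝ≥0∞) :=
          (hφmeas.comp (measurable_id.add_const r)).indicator ((measurable_id.add_const r) hΩ)
        have step2 : ∫⁻ x, Set.indicator {x : Fin d → ℝ | x + r ∈ Ω}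
              (fun x => φ (x + r)) x ∂(volume.restrict Ω)
            = ∫⁻ x, Ω.indicator (Set.indicator {x : Fin d → ℝ | x + r ∈ Ω}
                (fun x => φ (x + r))) x ∂volume := by
          rw [lintegral_indicator hΩ]
        have step3 : ∀ x, Ω.indicator (Set.indicator {x : Fin d → ℝ | x + r ∈ Ω}
            (fun x => φ (x + r))) x = K (x + r) := by
          intro x
          have hmemKr : (x + r ∈ {y : Fin d → ℝ | y - r ∈ Ω}) ↔ x ∈ Ω := by
            simp [add_sub_cancel_right]
          by_cases hx : x ∈ Ω
          · rw [Set.indicator_of_mem hx]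
            have e3 : K (x + r) = Φt (x + r) :=
              Set.indicator_of_mem (hmemKr.2 hx) _
            by_cases hxr : x + r ∈ Ω
            · have e2 : Set.indicator {x : Fin d → ℝ | x + r ∈ Ω}
                  (fun x => φ (x + r)) x = φ (x + r) :=
                Set.indicator_of_mem (show x ∈ {x | x + r ∈ Ω} from hxr) _
              have e4 : Φt (x + r) = φ (x + r) := Set.indicator_of_mem hxr _
              rw [e2, e3, e4]
            · have e2 : Set.indicator {x : Fin d → ℝ | x + r ∈ Ω}
                  (fun x => φ (x + r)) x = 0 :=
                Set.indicator_of_notMem (by simpa using hxr) _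
              have e4 : Φt (x + r) = 0 := Set.indicator_of_notMem hxr _
              rw [e2, e3, e4]
          · have e3 : K (x + r) = 0 :=
              Set.indicator_of_notMem (fun hc => hx (hmemKr.1 hc)) _
            rw [Set.indicator_of_notMem hx, e3]
        rw [step1, step2, lintegral_congr step3,
          (measurePreserving_add_right volume r).lintegral_comp hKmeas]
      have hAsplit : A = LL + B := by
        rw [hAeq, lintegral_congr hsplit, lintegral_add_left hI₁meas, hI2B]
      have hBtop : B ≠ ⊤ := by
        refine ne_top_of_le_ne_top hAtop ?_
        rw [hAsplit]
        exact le_add_self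
      set Cint : ℝ≥0∞ := ∫⁻ y, (Φt y - Φt (y - r)) ∂volume with hCint
      have hABC : A ≤ B + Cint := by
        have hAvol : A = ∫⁻ y, Φt y ∂volume := by
          rw [hA, hΦt, lintegral_indicator hΩ]
        rw [hAvol, hB, hCint, ← lintegral_add_left hKmeas]
        apply lintegral_mono
        intro y
        show Φt y ≤ K y + (Φt y - Φt (y - r))
        by_cases hyr : y - r ∈ Ω
        · have e1 : K y = Φt y :=
            Set.indicator_of_mem (show y ∈ {y | y - r ∈ Ω} from hyr) _
          rw [e1]
          exact le_self_add
        · have e1 : K y = 0 := Set.indicator_of_notMem (by simpa using hyr) _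
          have e2 : Φt (y - r) = 0 := Set.indicator_of_notMem hyr _
          rw [e1, e2, zero_add, tsub_zero]
      have hLLC : LL ≤ Cint := by
        have h1 : LL + B ≤ Cint + B := by
          rw [← hAsplit, add_comm Cint B]
          exact hABC
        exact (ENNReal.add_le_add_iff_right hBtop).1 h1
      refine hLLC.trans ?_
      -- Cint ≤ D (-r)
      have hDval : D (-r) = ∫⁻ y, (‖(Φ' : (Fin d → ℝ) → ℝ) (y + (-r))
          - (Φ' : (Fin d → ℝ) → ℝ) y‖₊ : ℝ≥0∞) ∂volume := eLpNorm_one_eq_lintegral_enorm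
      rw [hDval]
      apply lintegral_mono_ae
      filter_upwards [hΦG, htrans (-r) _ hΦG] with y h1 h2
      have hyr : y + (-r) = y - r := (sub_eq_add_neg y r).symm
      rw [hΦtG, hΦtG, ← ENNReal.ofReal_sub _ (hGnonneg _)]
      have habs : ENNReal.ofReal (G y - G (y - r)) ≤ (‖G y - G (y - r)‖₊ : ℝ≥0∞) := by
        rw [← enorm_eq_nnnorm, ← ofReal_norm]
        exact ENNReal.ofReal_le_ofReal (le_abs_self _)
      refine habs.trans ?_
      have hrev : (‖G y - G (y - r)‖₊ : ℝ≥0∞) = ‖G (y - r) - G y‖₊ := by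
        rw [← nnnorm_neg (G y - G (y - r)), neg_sub]
      rw [hrev, ← hyr, ← h1, ← h2]
    · -- second term
      have hHg : (fun x => (H' : (Fin d → ℝ) → ℂ) (x + r) - (g : (Fin d → ℝ) → ℂ) x)
          =ᵐ[volume.restrict Ω]
          (fun x => (H' : (Fin d → ℝ) → ℂ) (x + r) - (H' : (Fin d → ℝ) → ℂ) x) := by
        filter_upwards [hψ, ae_restrict_of_ae hH, ae_restrict_mem hΩ] with x h1 h2 h3
        rw [h1, h2, Set.indicator_of_mem h3]
      rw [eLpNorm_congr_ae hHg]
      exact eLpNorm_mono_measure _ Measure.restrict_le_self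
  -- conclusion
  have hM : Tendsto (fun r : Fin d → ℝ => D (-r) ^ (1/2 : ℝ)) (𝓝 0) (𝓝 0) := by
    have h1 := Filter.Tendsto.ennrpow_const (1/2 : ℝ) hDtend
    simpa [ENNReal.zero_rpow_of_pos] using h1
  have hsum : Tendsto (fun r : Fin d → ℝ => D (-r) ^ (1/2 : ℝ) + N r) (𝓝 0) (𝓝 0) := by
    simpa using hM.add hNtend
  have hedist : Tendsto (fun r => edist (Ug r) g) (𝓝 0) (𝓝 0) :=
    tendsto_of_tendsto_of_tendsto_of_le_of_le tendsto_const_nhds hsum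
      (fun r => zero_le) hbound
  exact EMetric.tendsto_nhds.2 fun ε hε => hedist (Iio_mem_nhds hε)

theorem statement14 (d : ℕ) (T : AddSubgroup (Fin d → ℝ))
    (hTc : (T : Set (Fin d → ℝ)).Countable)
    (Ω : Set (Fin d → ℝ)) (hΩ : MeasurableSet Ω)
    (htile : ∀ᵐ x ∂(volume : Measure (Fin d → ℝ)),
      ∑' τ : T, Set.indicator Ω (fun _ => (1 : ℝ)) (x - (τ : Fin d → ℝ)) = 1)
    (γ : (Fin d → ℝ) → (Fin d → ℝ)) (hγmeas : Measurable γ)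
    (hγT : ∀ x, γ x ∈ T)
    (hγΩ : ∀ᵐ x ∂(volume : Measure (Fin d → ℝ)), x - γ x ∈ Ω)
    (U : (Fin d → ℝ) → Lp ℂ 2 (volume.restrict Ω) → Lp ℂ 2 (volume.restrict Ω))
    (hU : ∀ t f, (U t f : (Fin d → ℝ) → ℂ) =ᵐ[volume.restrict Ω]
      fun x => (f : (Fin d → ℝ) → ℂ) (x + t - γ (x + t))) :
    (∀ t, IsLinearMap ℂ (U t)) ∧
    (∀ t f, ‖U t f‖ = ‖f‖) ∧
    (∀ t, Function.Bijective (U t)) ∧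
    (∀ t₁ t₂ f, U (t₁ + t₂) f = U t₁ (U t₂ f)) ∧
    (U 0 = id) ∧
    (∀ f, Continuous fun t => U t f) ∧
    (∀ V : Set (Fin d → ℝ), IsOpen V → V ⊆ Ω →
      ∀ t : Fin d → ℝ, (fun x => x + t) '' V ⊆ Ω →
      ∀ f, ∀ᵐ x ∂(volume.restrict V),
        (U t f : (Fin d → ℝ) → ℂ) x = (f : (Fin d → ℝ) → ℂ) (x + t)) := by
  haveI : Countable T := hTc.to_subtype
  have htrans : ∀ (r : Fin d → ℝ) (p : (Fin d → ℝ) → Prop),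
      (∀ᵐ x ∂(volume : Measure (Fin d → ℝ)), p x) →
      (∀ᵐ x ∂(volume : Measure (Fin d → ℝ)), p (x + r)) := fun r p hp =>
    (measurePreserving_add_right volume r).quasiMeasurePreserving.ae hp
  have hone := aux_unique T Ω htile
  have hmem := aux_mem T hTc Ω hone γ hγT hγΩ
  have hγ0 : ∀ᵐ x ∂(volume : Measure (Fin d → ℝ)), x ∈ Ω → γ x = 0 := by
    filter_upwards [hmem] with x hx hxΩ
    exact (hx ⟨0, zero_mem T⟩).2 (by simpa using hxΩ)
  have hSP : ∀ t : Fin d → ℝ, MeasurePreserving (fun x => x + t - γ (x + t))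
      (volume.restrict Ω) (volume.restrict Ω) :=
    fun t => aux_MP T hTc Ω hΩ γ hγmeas hγT hmem hone t
  have hQMP : ∀ t : Fin d → ℝ, Measure.QuasiMeasurePreserving (fun x => x + t - γ (x + t))
      (volume.restrict Ω) (volume.restrict Ω) := fun t => (hSP t).quasiMeasurePreserving
  -- cocycle property
  have hcoc : ∀ᵐ x ∂(volume : Measure (Fin d → ℝ)), ∀ τ : T, γ (x + ↑τ) = γ x + ↑τ := by
    have hall : ∀ᵐ x ∂(volume : Measure (Fin d → ℝ)), ∀ τ : T, ∀ σ : T,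
        (γ (x + ↑τ) = ↑σ ↔ x + ↑τ - ↑σ ∈ Ω) := by
      rw [ae_all_iff]
      intro τ
      exact htrans ↑τ _ hmem
    filter_upwards [hall, hγΩ] with x hx hxΩ
    intro τ
    refine (hx τ ⟨γ x + ↑τ, add_mem (hγT x) τ.2⟩).2 ?_
    have h : x + ↑τ - (γ x + ↑τ) = x - γ x := by ring
    rw [h]
    exact hxΩ
  -- composition of the maps S
  have hScomp : ∀ t₁ t₂ : Fin d → ℝ, ∀ᵐ x ∂(volume.restrict Ω),
      (fun x => x + t₂ - γ (x + t₂)) ((fun x => x + t₁ - γ (x + t₁)) x)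
        = x + (t₁ + t₂) - γ (x + (t₁ + t₂)) := by
    intro t₁ t₂
    apply ae_restrict_of_ae
    filter_upwards [htrans (t₁ + t₂) _ hcoc] with x hx
    have ha : -γ (x + t₁) ∈ T := neg_mem (hγT _)
    have h2 := hx ⟨-γ (x + t₁), ha⟩
    simp only [AddSubgroup.coe_mk] at h2
    have harg : (x + t₁ - γ (x + t₁)) + t₂ = x + (t₁ + t₂) + (-γ (x + t₁)) := by ring
    simp only [harg, h2]
    ring
  -- group law
  have hgrp : ∀ t₁ t₂ f, U (t₁ + t₂) f = U t₁ (U t₂ f) := by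
    intro t₁ t₂ f
    apply Lp.ext
    have e3 := (hQMP t₁).ae_eq (hU t₂ f)
    filter_upwards [hU (t₁ + t₂) f, hU t₁ (U t₂ f), e3, hScomp t₁ t₂] with x h1 h2 h3 h4
    rw [h1, h2]
    simp only [Function.comp_apply] at h3
    rw [h3, h4]
  have hU0 : U 0 = id := by
    funext f
    apply Lp.ext
    filter_upwards [hU 0 f, ae_restrict_of_ae hγ0, ae_restrict_mem hΩ] with x h1 h2 h3
    rw [h1]
    simp only [add_zero, h2 h3, sub_zero, id_eq]
  have hlin : ∀ t, IsLinearMap ℂ (U t) := by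
    intro t
    constructor
    · intro f g
      apply Lp.ext
      have e5 := (hQMP t).ae_eq (Lp.coeFn_add f g)
      filter_upwards [hU t (f + g), hU t f, hU t g,
        Lp.coeFn_add (U t f) (U t g), e5] with x h1 h2 h3 h4 h5
      simp only [Function.comp_apply] at h5
      rw [h1, h4, Pi.add_apply, h5, Pi.add_apply, ← h2, ← h3]
    · intro c f
      apply Lp.ext
      have e5 := (hQMP t).ae_eq (Lp.coeFn_smul c f)
      filter_upwards [hU t (c • f), hU t f,
        Lp.coeFn_smul c (U t f), e5] with x h1 h2 h3 h4
      simp only [Function.comp_apply] at h4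
      rw [h1, h3, Pi.smul_apply, h4, Pi.smul_apply, ← h2]
  have hnorm : ∀ t f, ‖U t f‖ = ‖f‖ := by
    intro t f
    rw [Lp.norm_def, Lp.norm_def]
    congr 1
    rw [eLpNorm_congr_ae (hU t f)]
    exact eLpNorm_comp_measurePreserving (Lp.aestronglyMeasurable f) (hSP t)
  have hbij : ∀ t, Function.Bijective (U t) := by
    intro t
    have hl : ∀ f, U (-t) (U t f) = f := fun f => by
      rw [← hgrp]
      simp [hU0]
    have hr : ∀ f, U t (U (-t) f) = f := fun f => by
      rw [← hgrp]
      simp [hU0]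
    exact Function.bijective_iff_has_inverse.2 ⟨U (-t), hl, hr⟩
  have hcont0 : ∀ g, Tendsto (fun r => U r g) (𝓝 0) (𝓝 g) := fun g =>
    aux_cont0 Ω hΩ γ hγmeas hγ0 hSP g (fun r => U r g) (fun r => hU r g)
  have hcont : ∀ f, Continuous fun t => U t f := by
    intro f
    rw [continuous_iff_continuousAt]
    intro s
    have heqn : (fun t => U t f) = (fun r => U r (U s f)) ∘ (fun t => t - s) := by
      funext t
      simp only [Function.comp_apply, ← hgrp, sub_add_cancel]
    rw [ContinuousAt, heqn]
    have hts : Tendsto (fun t : Fin d → ℝ => t - s) (𝓝 s) (𝓝 0) := by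
      have := (tendsto_id (x := 𝓝 s)).sub_const s
      simpa using this
    have := (hcont0 (U s f)).comp hts
    simpa [Function.comp] using this
  have hlocal : ∀ V : Set (Fin d → ℝ), IsOpen V → V ⊆ Ω →
      ∀ t : Fin d → ℝ, (fun x => x + t) '' V ⊆ Ω →
      ∀ f, ∀ᵐ x ∂(volume.restrict V),
        (U t f : (Fin d → ℝ) → ℂ) x = (f : (Fin d → ℝ) → ℂ) (x + t) := by
    intro V hVopen hVΩ t hVt f
    have hVν : volume.restrict V ≪ volume.restrict Ω :=
      (Measure.restrict_mono hVΩ le_rfl).absolutelyContinuous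
    have h1 : ∀ᵐ x ∂(volume.restrict V), (U t f : (Fin d → ℝ) → ℂ) x
        = (f : (Fin d → ℝ) → ℂ) (x + t - γ (x + t)) := hVν.ae_le (hU t f)
    have h2 : ∀ᵐ x ∂(volume : Measure (Fin d → ℝ)), x + t ∈ Ω → γ (x + t) = 0 :=
      htrans t _ hγ0
    filter_upwards [h1, ae_restrict_of_ae h2, ae_restrict_mem hVopen.measurableSet]
      with x hx1 hx2 hx3
    have hxt : x + t ∈ Ω := hVt ⟨x, hx3, rfl⟩
    rw [hx1, hx2 hxt, sub_zero]
  exact ⟨hlin, hnorm, hbij, hgrp, hU0, hcont, hlocal⟩
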